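/- For every Motzkin tree X, the number of closed lambda terms in de Bruijn form whose skeleton is X equals the product, taken over all leaves of X, of the number of unary nodes l on the path from the root of X to that leaf. -/
import Mathlib


/-- Motzkin trees (binary-unary trees): leaf `v`, unary `l`, binary `a`. -/
inductive Mot : Type
  | v : Mot
  | l : Mot → Mot
  | a : Mot → Mot → Mot
deriving DecidableEq

/-- Lambda terms in de Bruijn form. -/
inductive Lam : Type
  | v : Nat → Lam
  | l : Lam → Lam
  | a : Lam → Lam → Lam
deriving DecidableEq

/-- `t` is closed at depth `d`. -/
def Lam.closedAt : Lam → Nat → Prop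
  | .v i, d => i < d
  | .l t, d => t.closedAt (d + 1)
  | .a s t, d => s.closedAt d ∧ t.closedAt d

/-- The Motzkin-tree skeleton of a de Bruijn term. -/
def Lam.skel : Lam → Mot
  | .v _ => .v
  | .l t => .l t.skel
  | .a s t => .a s.skel t.skel

/-- For each leaf (in left-to-right order), the number of unary `l` nodes on the
path from the root to that leaf, starting from `d` accumulated binders. -/
def Mot.leafDepths : Mot → Nat → List Nat
  | .v, d => [d]
  | .l t, d => t.leafDepths (d + 1)
  | .a s t, d => s.leafDepths d ++ t.leafDepths d


def eqV (d : Nat) : {t : Lam // t.closedAt d ∧ t.skel = .v} ≃ Fin d where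
  toFun := fun ⟨t, h⟩ => match t, h with
    | .v i, h => ⟨i, h.1⟩
  invFun := fun i => ⟨.v i, i.2, rfl⟩
  left_inv := fun ⟨t, h⟩ => by
    match t, h with
    | .v i, h => rfl
  right_inv := fun i => rfl

def eqL (X : Mot) (d : Nat) :
    {t : Lam // t.closedAt d ∧ t.skel = .l X} ≃ {t : Lam // t.closedAt (d+1) ∧ t.skel = X} where
  toFun := fun ⟨t, h⟩ => match t, h with
    | .l t, h => ⟨t, h.1, by injection h.2⟩
  invFun := fun ⟨t, h⟩ => ⟨.l t, h.1, by simp [Lam.skel, h.2]⟩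
  left_inv := fun ⟨t, h⟩ => by
    match t, h with
    | .l t, h => rfl
  right_inv := fun ⟨t, h⟩ => rfl

def eqA (X Y : Mot) (d : Nat) :
    {t : Lam // t.closedAt d ∧ t.skel = .a X Y} ≃
      {t : Lam // t.closedAt d ∧ t.skel = X} × {t : Lam // t.closedAt d ∧ t.skel = Y} where
  toFun := fun ⟨t, h⟩ => match t, h with
    | .a s t, h => (⟨s, h.1.1, by injection h.2⟩, ⟨t, h.1.2, by injection h.2⟩)
  invFun := fun (⟨s, hs⟩, ⟨t, ht⟩) => ⟨.a s t, ⟨hs.1, ht.1⟩, by simp [Lam.skel, hs.2, ht.2]⟩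
  left_inv := fun ⟨t, h⟩ => by
    match t, h with
    | .a s t, h => rfl
  right_inv := fun (⟨s, hs⟩, ⟨t, ht⟩) => rfl

theorem key (X : Mot) : ∀ d, Nat.card {t : Lam // t.closedAt d ∧ t.skel = X} = (X.leafDepths d).prod := by
  induction X with
  | v => intro d; rw [Nat.card_congr (eqV d)]; simp [Mot.leafDepths]
  | l X ih => intro d; rw [Nat.card_congr (eqL X d), ih]; rfl
  | a X Y ihX ihY =>
    intro d
    rw [Nat.card_congr (eqA X Y d), Nat.card_prod, ihX, ihY, Mot.leafDepths, List.prod_append]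

/-- The number of closed de Bruijn lambda terms with skeleton `X` equals the product,
over all leaves of `X`, of the number of `l` nodes on the root-to-leaf path. -/
theorem stmt2 (X : Mot) :
    Nat.card {t : Lam // t.closedAt 0 ∧ t.skel = X} = (X.leafDepths 0).prod := by
  exact key X 0
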